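/- Let n ≥ 2 and m, k be integers with gcd(n, m, k) = 1; set A = k and B = k − m. If (β+.0) and (β−.1) both hold, or (β+.1) and (β−.0) both hold, then n divides 10; if moreover neither (ρ.0) nor (ρ.1) holds, then n = 10. -/

import Mathlib

/-- `c ≡ n/2 (mod n)`: `2` divides `n` and `c ≡ n/2 (mod n)`. -/
def halfMod (n c : ℤ) : Prop := 2 ∣ n ∧ n ∣ (c - n / 2)

/-- `c ≡ ±n/p (mod n)`: `p` divides `n`, and `c ≡ n/p` or `c ≡ -n/p (mod n)`. -/
def pmMod (n p c : ℤ) : Prop := p ∣ n ∧ (n ∣ (c - n / p) ∨ n ∣ (c + n / p))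

/-- `c ≡ ±2n/5 (mod n)`: `5` divides `n`, and `c ≡ 2n/5` or `c ≡ -2n/5 (mod n)`. -/
def pm2n5Mod (n c : ℤ) : Prop := 5 ∣ n ∧ (n ∣ (c - 2 * (n / 5)) ∨ n ∣ (c + 2 * (n / 5)))

/-- Condition (ρ) for a parameter `c` (i.e. (ρ.0) when `c = B`, (ρ.1) when `c = A`):
`c ≡ n/2` or `c ≡ ±n/3` or `c ≡ ±n/4` or `c ≡ ±n/5` or `c ≡ ±2n/5 (mod n)`. -/
def condRho (n c : ℤ) : Prop :=
  halfMod n c ∨ pmMod n 3 c ∨ pmMod n 4 c ∨ pmMod n 5 c ∨ pm2n5Mod n c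

theorem stmt16 (n : ℕ) (hn : 2 ≤ n) (m k : ℤ)
    (hgcd : Int.gcd (n : ℤ) ((Int.gcd m k : ℤ)) = 1)
    -- (β+.0) and (β−.1), or (β+.1) and (β−.0)
    (h : ((n : ℤ) ∣ (k + 3 * (k - m)) ∧ (n : ℤ) ∣ ((k - m) - 3 * k)) ∨
         ((n : ℤ) ∣ ((k - m) + 3 * k) ∧ (n : ℤ) ∣ (k - 3 * (k - m)))) :
    n ∣ 10 ∧ ((¬ condRho (n : ℤ) (k - m) ∧ ¬ condRho (n : ℤ) k) → n = 10) := by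
  have h10A : (n : ℤ) ∣ 10 * k := by
    rcases h with ⟨h1, h2⟩ | ⟨h1, h2⟩
    · have : 10 * k = (k + 3 * (k - m)) - 3 * ((k - m) - 3 * k) := by ring
      rw [this]; exact dvd_sub h1 (h2.mul_left 3)
    · have : 10 * k = 3 * ((k - m) + 3 * k) + (k - 3 * (k - m)) := by ring
      rw [this]; exact dvd_add (h1.mul_left 3) h2
  have h10B : (n : ℤ) ∣ 10 * (k - m) := by
    rcases h with ⟨h1, h2⟩ | ⟨h1, h2⟩
    · have : 10 * (k - m) = 3 * (k + 3 * (k - m)) + ((k - m) - 3 * k) := by ring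
      rw [this]; exact dvd_add (h1.mul_left 3) h2
    · have : 10 * (k - m) = ((k - m) + 3 * k) - 3 * (k - 3 * (k - m)) := by ring
      rw [this]; exact dvd_sub h1 (h2.mul_left 3)
  have hg : (n : ℤ) ∣ (10 : ℤ) * (Int.gcd k (k - m) : ℤ) := by
    have h := Int.dvd_coe_gcd h10A h10B
    rwa [Int.gcd_mul_left, show ((10:ℤ).natAbs) = 10 from rfl, Nat.cast_mul,
      Nat.cast_ofNat] at h
  have hcop : IsCoprime ((n : ℕ) : ℤ) ((Int.gcd m k : ℕ) : ℤ) :=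
    Int.isCoprime_iff_gcd_eq_one.mpr hgcd
  have hdm : ((Int.gcd k (k - m) : ℕ) : ℤ) ∣ m := by
    have h1 : ((Int.gcd k (k - m) : ℕ) : ℤ) ∣ k := Int.gcd_dvd_left _ _
    have h2 : ((Int.gcd k (k - m) : ℕ) : ℤ) ∣ (k - m) := Int.gcd_dvd_right _ _
    have := dvd_sub h1 h2
    simpa using this
  have hdvd : ((Int.gcd k (k - m) : ℕ) : ℤ) ∣ ((Int.gcd m k : ℕ) : ℤ) :=
    Int.dvd_coe_gcd hdm (Int.gcd_dvd_left _ _)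
  have hcop2 : IsCoprime ((n : ℕ) : ℤ) ((Int.gcd k (k - m) : ℕ) : ℤ) :=
    IsCoprime.of_isCoprime_of_dvd_right hcop hdvd
  have hdz : (n : ℤ) ∣ 10 := hcop2.dvd_of_dvd_mul_right hg
  have hd10 : n ∣ 10 := by exact_mod_cast hdz
  refine ⟨hd10, ?_⟩
  rintro ⟨hB, hA⟩
  have hle : n ≤ 10 := Nat.le_of_dvd (by norm_num) hd10
  -- a helper for contradictions with the gcd condition
  have contra : ∀ c : ℤ, 1 < c → c ∣ (n : ℤ) → c ∣ m → c ∣ k → False := by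
    intro c hc hcn hcm hck
    have h1 : c ∣ ((Int.gcd m k : ℕ) : ℤ) := Int.dvd_coe_gcd hcm hck
    have h2 : IsUnit c := IsCoprime.isUnit_of_dvd' hcop hcn h1
    rw [Int.isUnit_iff] at h2
    omega
  interval_cases n
  · -- n = 2
    exfalso
    have hBe : (2 : ℤ) ∣ (k - m) := by
      by_contra hc
      exact hB (Or.inl ⟨by norm_num, by omega⟩)
    have hAe : (2 : ℤ) ∣ k := by
      by_contra hc
      exact hA (Or.inl ⟨by norm_num, by omega⟩)
    exact contra 2 (by norm_num) (by norm_num) (by omega) hAe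
  · omega
  · omega
  · -- n = 5
    exfalso
    have hBe : (5 : ℤ) ∣ (k - m) := by
      by_contra hc
      have hres : (5:ℤ) ∣ (k - m) - 1 ∨ (5:ℤ) ∣ (k - m) + 1 ∨
          (5:ℤ) ∣ (k - m) - 2 ∨ (5:ℤ) ∣ (k - m) + 2 := by omega
      rcases hres with h1 | h1 | h1 | h1
      · exact hB (Or.inr (Or.inr (Or.inr (Or.inl ⟨by norm_num, Or.inl (by omega)⟩))))
      · exact hB (Or.inr (Or.inr (Or.inr (Or.inl ⟨by norm_num, Or.inr (by omega)⟩))))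
      · exact hB (Or.inr (Or.inr (Or.inr (Or.inr ⟨by norm_num, Or.inl (by omega)⟩))))
      · exact hB (Or.inr (Or.inr (Or.inr (Or.inr ⟨by norm_num, Or.inr (by omega)⟩))))
    have hAe : (5 : ℤ) ∣ k := by
      by_contra hc
      have hres : (5:ℤ) ∣ k - 1 ∨ (5:ℤ) ∣ k + 1 ∨ (5:ℤ) ∣ k - 2 ∨ (5:ℤ) ∣ k + 2 := by omega
      rcases hres with h1 | h1 | h1 | h1
      · exact hA (Or.inr (Or.inr (Or.inr (Or.inl ⟨by norm_num, Or.inl (by omega)⟩))))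
      · exact hA (Or.inr (Or.inr (Or.inr (Or.inl ⟨by norm_num, Or.inr (by omega)⟩))))
      · exact hA (Or.inr (Or.inr (Or.inr (Or.inr ⟨by norm_num, Or.inl (by omega)⟩))))
      · exact hA (Or.inr (Or.inr (Or.inr (Or.inr ⟨by norm_num, Or.inr (by omega)⟩))))
    exact contra 5 (by norm_num) (by norm_num) (by omega) hAe
  · omega
  · omega
  · omega
  · omega
  · rfl
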